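/- Let P be a poset with least element 0 which is Z-complete, where Z ⊆ P satisfies: for all y, z ∈ Z the infimum y∧z exists in P and lies in Z; every Z-disjoint pair {p,q} ⊆ Z has a least upper bound within the subposet Z; and Z is Z-modular. Then the relations ≾_Z and ∼_Z are Z-complete binary relations on P. -/

import Mathlib

/-- `S` is `Z`-disjoint: there is `f : S → Z` with `p ≤ f p` and `f p ∧ f q = 0`
for distinct `p, q ∈ S`. -/
def ZDisjoint {β : Type*} [PartialOrder β] [OrderBot β] (Z S : Set β) : Prop :=
  ∃ f : β → β, (∀ p ∈ S, f p ∈ Z ∧ p ≤ f p) ∧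
    ∀ p ∈ S, ∀ q ∈ S, p ≠ q → Disjoint (f p) (f q)

/-- `I` is `Z`-complete: every `Z`-disjoint `S ⊆ I` has a supremum lying in `I`, and
whenever `{p, q}` is `Z`-disjoint with supremum in `I`, both `p` and `q` lie in `I`. -/
def ZComplete {β : Type*} [PartialOrder β] [OrderBot β] (Z I : Set β) : Prop :=
  (∀ S ⊆ I, ZDisjoint Z S → ∃ s, IsLUB S s ∧ s ∈ I) ∧
  (∀ p q s, ZDisjoint Z {p, q} → IsLUB {p, q} s → s ∈ I → p ∈ I ∧ q ∈ I)

/-- `Z` is `S`-central: for every `p ∈ S` and `y ∈ Z` there is `z ∈ Z` with `y ∧ z = 0`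
and `p` the supremum of some `q ≤ y` and `r ≤ z`. -/
def SCentral {β : Type*} [PartialOrder β] [OrderBot β] (Z S : Set β) : Prop :=
  ∀ p ∈ S, ∀ y ∈ Z, ∃ z ∈ Z, Disjoint y z ∧ ∃ q r, q ≤ y ∧ r ≤ z ∧ IsLUB {q, r} p
/-- `Z` is `Z`-modular: whenever `y, z ∈ Z` with `y ∧ z = 0`, `p, q ∈ Z` with `p ≤ y`,
`q ≤ z` and `p, q` have a least upper bound `s` within the subposet `Z`, then `q` is the
greatest lower bound within `Z` of `z` and `s`. -/
def ZModular {β : Type*} [PartialOrder β] [OrderBot β] (Z : Set β) : Prop :=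
  ∀ y ∈ Z, ∀ z ∈ Z, Disjoint y z → ∀ p ∈ Z, ∀ q ∈ Z, p ≤ y → q ≤ z →
    ∀ s ∈ Z, (p ≤ s ∧ q ≤ s ∧ ∀ w ∈ Z, p ≤ w → q ≤ w → s ≤ w) →
      (q ≤ s ∧ ∀ w ∈ Z, w ≤ z → w ≤ s → w ≤ q)

section Aux
variable {α : Type*} [PartialOrder α] [OrderBot α]

/-- Key lemma: if `p₁, p₂ ≤ a`, `q₂ ≤ b` with `a, b ∈ Z` disjoint, and `p₁` is below
any `z ∈ Z` above both `p₂` and `q₂`, then `p₁` is below any `z ∈ Z` above `p₂`. -/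
lemma aux_core (Z : Set α)
    (hinf : ∀ y ∈ Z, ∀ z ∈ Z, ∃ w, IsGLB {y, z} w ∧ w ∈ Z)
    (hdir : ∀ p ∈ Z, ∀ q ∈ Z, ZDisjoint Z {p, q} →
      ∃ s ∈ Z, p ≤ s ∧ q ≤ s ∧ ∀ w ∈ Z, p ≤ w → q ≤ w → s ≤ w)
    (hzm : ZModular Z)
    {a b : α} (ha : a ∈ Z) (hb : b ∈ Z) (hab : Disjoint a b)
    {p₁ p₂ q₂ : α} (hp₁ : p₁ ≤ a) (hp₂ : p₂ ≤ a) (hq₂ : q₂ ≤ b)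
    (H : ∀ z ∈ Z, p₂ ≤ z → q₂ ≤ z → p₁ ≤ z) :
    ∀ z ∈ Z, p₂ ≤ z → p₁ ≤ z := by
  intro z hz hpz
  obtain ⟨w, hwglb, hwZ⟩ := hinf z hz a ha
  have hwz : w ≤ z := hwglb.1 (Set.mem_insert _ _)
  have hwa : w ≤ a := hwglb.1 (by simp)
  have hpw : p₂ ≤ w := hwglb.2 (by
    rintro t ht
    simp only [Set.mem_insert_iff, Set.mem_singleton_iff] at ht
    rcases ht with rfl | rfl
    · exact hpz
    · exact hp₂)
  have hwb : Disjoint w b := hab.mono_left hwa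
  have hd : ZDisjoint Z ({w, b} : Set α) := by
    refine ⟨id, fun p hp => ?_, fun p hp q hq hpq => ?_⟩
    · simp only [Set.mem_insert_iff, Set.mem_singleton_iff] at hp
      rcases hp with rfl | rfl
      · exact ⟨hwZ, le_rfl⟩
      · exact ⟨hb, le_rfl⟩
    · simp only [Set.mem_insert_iff, Set.mem_singleton_iff] at hp hq
      rcases hp with rfl | rfl <;> rcases hq with rfl | rfl
      · exact absurd rfl hpq
      · exact hwb
      · exact hwb.symm
      · exact absurd rfl hpq
  obtain ⟨s', hs'Z, hws', hbs', hmin⟩ := hdir w hwZ b hb hd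
  have hp₁s' : p₁ ≤ s' := H s' hs'Z (hpw.trans hws') (hq₂.trans hbs')
  have hmod := hzm b hb a ha hab.symm b hb w hwZ le_rfl hwa s' hs'Z
    ⟨hbs', hws', fun u huZ hbu hwu => hmin u huZ hwu hbu⟩
  obtain ⟨u, huglb, huZ⟩ := hinf a ha s' hs'Z
  have hua : u ≤ a := huglb.1 (Set.mem_insert _ _)
  have hus' : u ≤ s' := huglb.1 (by simp)
  have hp₁u : p₁ ≤ u := huglb.2 (by
    rintro t ht
    simp only [Set.mem_insert_iff, Set.mem_singleton_iff] at ht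
    rcases ht with rfl | rfl
    · exact hp₁
    · exact hp₁s')
  exact hp₁u.trans ((hmod.2 u huZ hua hus').trans hwz)

lemma aux_disj_fst {x y : α × α} (h : Disjoint x y) : Disjoint x.1 y.1 := by
  intro c hc1 hc2
  exact (h (show ((c, ⊥) : α × α) ≤ x from ⟨hc1, bot_le⟩)
    (show ((c, ⊥) : α × α) ≤ y from ⟨hc2, bot_le⟩)).1

lemma aux_disj_snd {x y : α × α} (h : Disjoint x y) : Disjoint x.2 y.2 := by
  intro c hc1 hc2
  exact (h (show ((⊥, c) : α × α) ≤ x from ⟨bot_le, hc1⟩)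
    (show ((⊥, c) : α × α) ≤ y from ⟨bot_le, hc2⟩)).2

/-- Projections of a `Δ_Z`-disjoint family are `Z`-disjoint. -/
lemma aux_proj_fst (Z : Set α) (S : Set (α × α))
    (h : ZDisjoint ((fun z => (z, z)) '' Z) S) : ZDisjoint Z (Prod.fst '' S) := by
  classical
  obtain ⟨f, hf1, hf2⟩ := h
  refine ⟨fun p => if hp : p ∈ Prod.fst '' S then (f hp.choose).1 else ⊥,
    fun p hp => ?_, fun p hp q hq hpq => ?_⟩
  · simp only [dif_pos hp]
    obtain ⟨hxS, hx1⟩ := hp.choose_spec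
    obtain ⟨hfZ, hle⟩ := hf1 _ hxS
    obtain ⟨z, hzZ, hz⟩ := hfZ
    constructor
    · rw [← hz]; exact hzZ
    · exact le_trans (le_of_eq hx1.symm) hle.1
  · simp only [dif_pos hp, dif_pos hq]
    have hne : hp.choose ≠ hq.choose := by
      intro he
      exact hpq (hp.choose_spec.2.symm.trans (he ▸ hq.choose_spec.2))
    exact aux_disj_fst (hf2 _ hp.choose_spec.1 _ hq.choose_spec.1 hne)

lemma aux_proj_snd (Z : Set α) (S : Set (α × α))
    (h : ZDisjoint ((fun z => (z, z)) '' Z) S) : ZDisjoint Z (Prod.snd '' S) := by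
  classical
  obtain ⟨f, hf1, hf2⟩ := h
  refine ⟨fun p => if hp : p ∈ Prod.snd '' S then (f hp.choose).2 else ⊥,
    fun p hp => ?_, fun p hp q hq hpq => ?_⟩
  · simp only [dif_pos hp]
    obtain ⟨hxS, hx2⟩ := hp.choose_spec
    obtain ⟨hfZ, hle⟩ := hf1 _ hxS
    obtain ⟨z, hzZ, hz⟩ := hfZ
    constructor
    · rw [← hz]; exact hzZ
    · exact le_trans (le_of_eq hx2.symm) hle.2
  · simp only [dif_pos hp, dif_pos hq]
    have hne : hp.choose ≠ hq.choose := by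
      intro he
      exact hpq (hp.choose_spec.2.symm.trans (he ▸ hq.choose_spec.2))
    exact aux_disj_snd (hf2 _ hp.choose_spec.1 _ hq.choose_spec.1 hne)

end Aux

/-- If `P` is `Z`-complete and `Z` is a `Z`-directed (every `Z`-disjoint pair in `Z` has
a least upper bound within the subposet `Z`) `Z`-modular lower sublattice of `P` (binary
infima of elements of `Z` exist in `P` and lie in `Z`), then the relations `≾_Z` and
`∼_Z` are `Z`-complete, i.e. as subsets of `P × P` they are `Δ_Z`-complete, where
`p ≾_Z q` iff every `z ∈ Z` above `q` is above `p`, and `p ∼_Z q` iff `p ≾_Z q ≾_Z p`. -/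
theorem stmt13 {α : Type*} [PartialOrder α] [OrderBot α] (Z : Set α)
    (hP : ZComplete Z (Set.univ : Set α))
    (hinf : ∀ y ∈ Z, ∀ z ∈ Z, ∃ w, IsGLB {y, z} w ∧ w ∈ Z)
    (hdir : ∀ p ∈ Z, ∀ q ∈ Z, ZDisjoint Z {p, q} →
      ∃ s ∈ Z, p ≤ s ∧ q ≤ s ∧ ∀ w ∈ Z, p ≤ w → q ≤ w → s ≤ w)
    (hzm : ZModular Z) :
    ZComplete ((fun z => (z, z)) '' Z : Set (α × α))
      {x : α × α | ∀ z ∈ Z, x.2 ≤ z → x.1 ≤ z} ∧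
    ZComplete ((fun z => (z, z)) '' Z : Set (α × α))
      {x : α × α | ∀ z ∈ Z, (x.2 ≤ z ↔ x.1 ≤ z)} := by
  -- Part (1), common to both relations: componentwise suprema.
  have sup1 : ∀ S : Set (α × α), ZDisjoint ((fun z => (z, z)) '' Z) S →
      ∃ s : α × α, IsLUB S s ∧ IsLUB (Prod.fst '' S) s.1 ∧ IsLUB (Prod.snd '' S) s.2 := by
    intro S hS
    obtain ⟨s₁, h₁, -⟩ := hP.1 _ (Set.subset_univ _) (aux_proj_fst Z S hS)
    obtain ⟨s₂, h₂, -⟩ := hP.1 _ (Set.subset_univ _) (aux_proj_snd Z S hS)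
    exact ⟨(s₁, s₂), isLUB_prod.2 ⟨h₁, h₂⟩, h₁, h₂⟩
  -- Part (2), the key step, for a pair `x ≠ y` with covers `a, b`.
  have key : ∀ x y s : α × α, ZDisjoint ((fun z => (z, z)) '' Z) {x, y} →
      IsLUB {x, y} s → x ≠ y →
      (∀ z ∈ Z, s.2 ≤ z → s.1 ≤ z) → ∀ z ∈ Z, x.2 ≤ z → x.1 ≤ z := by
    intro x y s hd hlub hne hs
    obtain ⟨f, hf1, hf2⟩ := hd
    obtain ⟨hfxZ, hxle⟩ := hf1 x (Set.mem_insert _ _)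
    obtain ⟨hfyZ, hyle⟩ := hf1 y (by simp)
    obtain ⟨a, haZ, hfa⟩ := hfxZ
    obtain ⟨b, hbZ, hfb⟩ := hfyZ
    rw [← hfa] at hxle
    rw [← hfb] at hyle
    have hab : Disjoint a b := by
      have := hf2 x (Set.mem_insert _ _) y (by simp) hne
      rw [← hfa, ← hfb] at this
      exact aux_disj_fst this
    have hxs : x ≤ s := hlub.1 (Set.mem_insert _ _)
    have hys : y ≤ s := hlub.1 (by simp)
    refine aux_core Z hinf hdir hzm haZ hbZ hab hxle.1 hxle.2 hyle.2 ?_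
    intro z hz h1 h2
    have hub : (s.1, z) ∈ upperBounds ({x, y} : Set (α × α)) := by
      rintro t ht
      simp only [Set.mem_insert_iff, Set.mem_singleton_iff] at ht
      rcases ht with rfl | rfl
      · exact ⟨hxs.1, h1⟩
      · exact ⟨hys.1, h2⟩
    exact hxs.1.trans (hs z hz (hlub.2 hub).2)
  -- Symmetric version (coordinates swapped).
  have key' : ∀ x y s : α × α, ZDisjoint ((fun z => (z, z)) '' Z) {x, y} →
      IsLUB {x, y} s → x ≠ y →
      (∀ z ∈ Z, s.1 ≤ z → s.2 ≤ z) → ∀ z ∈ Z, x.1 ≤ z → x.2 ≤ z := by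
    intro x y s hd hlub hne hs
    obtain ⟨f, hf1, hf2⟩ := hd
    obtain ⟨hfxZ, hxle⟩ := hf1 x (Set.mem_insert _ _)
    obtain ⟨hfyZ, hyle⟩ := hf1 y (by simp)
    obtain ⟨a, haZ, hfa⟩ := hfxZ
    obtain ⟨b, hbZ, hfb⟩ := hfyZ
    rw [← hfa] at hxle
    rw [← hfb] at hyle
    have hab : Disjoint a b := by
      have := hf2 x (Set.mem_insert _ _) y (by simp) hne
      rw [← hfa, ← hfb] at this
      exact aux_disj_fst this
    have hxs : x ≤ s := hlub.1 (Set.mem_insert _ _)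
    have hys : y ≤ s := hlub.1 (by simp)
    refine aux_core Z hinf hdir hzm haZ hbZ hab hxle.2 hxle.1 hyle.1 ?_
    intro z hz h1 h2
    have hub : (z, s.2) ∈ upperBounds ({x, y} : Set (α × α)) := by
      rintro t ht
      simp only [Set.mem_insert_iff, Set.mem_singleton_iff] at ht
      rcases ht with rfl | rfl
      · exact ⟨h1, hxs.2⟩
      · exact ⟨h2, hys.2⟩
    exact hxs.2.trans (hs z hz (hlub.2 hub).1)
  -- pair swapping
  have pair_comm : ∀ x y : α × α, ({x, y} : Set (α × α)) = {y, x} := fun x y =>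
    Set.pair_comm x y
  constructor
  · constructor
    · intro S hSI hS
      obtain ⟨s, hlub, h₁, h₂⟩ := sup1 S hS
      refine ⟨s, hlub, fun z hz hsz => ?_⟩
      refine h₁.2 ?_
      rintro p ⟨t, htS, rfl⟩
      exact hSI htS z hz ((h₂.1 ⟨t, htS, rfl⟩).trans hsz)
    · intro x y s hd hlub hsI
      by_cases hne : x = y
      · subst hne
        have : s = x := le_antisymm (hlub.2 (by rintro t ht; simp only [Set.mem_insert_iff,
            Set.mem_singleton_iff, or_self] at ht; subst ht; exact le_rfl))
          (hlub.1 (Set.mem_insert _ _))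
        subst this
        exact ⟨hsI, hsI⟩
      · refine ⟨key x y s hd hlub hne hsI, key y x s ?_ ?_ (Ne.symm hne) hsI⟩
        · rw [pair_comm y x]; exact hd
        · rw [pair_comm y x]; exact hlub
  · constructor
    · intro S hSI hS
      obtain ⟨s, hlub, h₁, h₂⟩ := sup1 S hS
      refine ⟨s, hlub, fun z hz => ⟨fun hsz => ?_, fun hsz => ?_⟩⟩
      · refine h₁.2 ?_
        rintro p ⟨t, htS, rfl⟩
        exact (hSI htS z hz).1 ((h₂.1 ⟨t, htS, rfl⟩).trans hsz)
      · refine h₂.2 ?_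
        rintro p ⟨t, htS, rfl⟩
        exact (hSI htS z hz).2 ((h₁.1 ⟨t, htS, rfl⟩).trans hsz)
    · intro x y s hd hlub hsI
      by_cases hne : x = y
      · subst hne
        have : s = x := le_antisymm (hlub.2 (by rintro t ht; simp only [Set.mem_insert_iff,
            Set.mem_singleton_iff, or_self] at ht; subst ht; exact le_rfl))
          (hlub.1 (Set.mem_insert _ _))
        subst this
        exact ⟨hsI, hsI⟩
      · have hd' : ZDisjoint ((fun z => (z, z)) '' Z) ({y, x} : Set (α × α)) := by
          rw [pair_comm y x]; exact hd
        have hlub' : IsLUB ({y, x} : Set (α × α)) s := by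
          rw [pair_comm y x]; exact hlub
        have hs1 : ∀ z ∈ Z, s.2 ≤ z → s.1 ≤ z := fun z hz h => (hsI z hz).1 h
        have hs2 : ∀ z ∈ Z, s.1 ≤ z → s.2 ≤ z := fun z hz h => (hsI z hz).2 h
        exact ⟨fun z hz => ⟨key x y s hd hlub hne hs1 z hz,
            key' x y s hd hlub hne hs2 z hz⟩,
          fun z hz => ⟨key y x s hd' hlub' (Ne.symm hne) hs1 z hz,
            key' y x s hd' hlub' (Ne.symm hne) hs2 z hz⟩⟩
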